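/- If U ⊆ k^n is a subspace such that for every basis b of a matroid M on {1,...,n} the composition U ↪ k^n ↠ span{t_i : i ∈ b} is an isomorphism, then the orthogonal complement U^⊥ = ker((k^n)^* → U^*) has the same property with respect to the dual matroid M^∨, i.e. for every basis b^c of M^∨ the projection U^⊥ → span{u_i : i ∈ b^c} is an isomorphism. -/

import Mathlib

noncomputable def dotWith {k : Type*} [Field k] {n : ℕ} (u : Fin n → k) :
    (Fin n → k) →ₗ[k] k :=
  ∑ i, u i • (LinearMap.proj i : (Fin n → k) →ₗ[k] k)

noncomputable def dualPerp {k : Type*} [Field k] {n : ℕ} (U : Submodule k (Fin n → k)) :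
    Submodule k (Fin n → k) :=
  ⨅ u ∈ U, LinearMap.ker (dotWith u)

lemma mem_dualPerp_iff {k : Type*} [Field k] {n : ℕ} {U : Submodule k (Fin n → k)}
    (x : Fin n → k) : x ∈ dualPerp U ↔ ∀ u ∈ U, ∑ i, u i * x i = 0 := by
  simp [dualPerp, dotWith, LinearMap.sum_apply, Submodule.mem_iInf, LinearMap.mem_ker]

lemma split_sum {k : Type*} [Field k] {n : ℕ} (b : Set (Fin n))
    [Fintype ↥b] [Fintype ↥bᶜ] (f : Fin n → k) :
    ∑ i, f i = (∑ i : ↥b, f i) + (∑ i : ↥(bᶜ), f i) := by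
  classical
  rw [← Finset.sum_filter_add_sum_filter_not Finset.univ (· ∈ b)]
  congr 1
  · exact Finset.sum_subtype _ (by simp) f
  · exact Finset.sum_subtype _ (by simp) f

/-- If `U ⊆ k^n` is a parameter space for a matroid `M` on `{1, …, n}`
(for every basis `b` of `M` the composite `U ↪ k^n ↠ span{t_i ∣ i ∈ b}` is an
isomorphism), then `U^⊥` is a parameter space for the dual matroid `M^∨`: for every
basis `b` of `M^∨` the projection `U^⊥ → span{u_i ∣ i ∈ b}` is an isomorphism. -/
theorem dualPerp_parameter_space {k : Type*} [Field k] {n : ℕ}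
    (M : Matroid (Fin n)) (hME : M.E = Set.univ)
    (U : Submodule k (Fin n → k))
    (hU : ∀ b : Set (Fin n), M.IsBase b →
      Function.Bijective (fun (u : U) (i : b) => (u : Fin n → k) i)) :
    ∀ b : Set (Fin n), M✶.IsBase b →
      Function.Bijective (fun (x : dualPerp U) (i : b) => (x : Fin n → k) i) := by
  classical
  intro b hb
  have hsub : b ⊆ M.E := by rw [hME]; exact Set.subset_univ b
  have hbc : M.IsBase bᶜ := by
    have := (Matroid.dual_isBase_iff hsub).mp hb
    rwa [hME, ← Set.compl_eq_univ_diff] at this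
  haveI : Fintype ↥b := (Set.toFinite b).fintype
  haveI : Fintype ↥(bᶜ) := (Set.toFinite _).fintype
  set L : U →ₗ[k] (↥(bᶜ) → k) :=
    (LinearMap.funLeft k k ((↑) : ↥(bᶜ) → Fin n)).comp U.subtype with hLdef
  have hL : Function.Bijective L := hU bᶜ hbc
  set e : U ≃ₗ[k] (↥(bᶜ) → k) := LinearEquiv.ofBijective L hL with hedef
  -- the restriction of any u ∈ U to bᶜ, as an element of the codomain of e
  have hres : ∀ w : U, e w = fun i : ↥(bᶜ) => (w : Fin n → k) ↑i := fun _ => rfl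
  -- key reconstruction identity
  have hsum : ∀ u : Fin n → k, u ∈ U → ∀ j : Fin n,
      ∑ i : ↥(bᶜ), u ↑i * ((e.symm (Pi.single i 1) : U) : Fin n → k) j = u j := by
    intro u hu j
    have h1 : (∑ i : ↥(bᶜ), u ↑i • (Pi.single i 1 : ↥(bᶜ) → k)) = fun i : ↥(bᶜ) => u ↑i := by
      ext i
      simp [Pi.single_apply, Finset.sum_apply]
    have h2 : e.symm (fun i : ↥(bᶜ) => u ↑i) = (⟨u, hu⟩ : U) := by
      have h3 : (fun i : ↥(bᶜ) => u ↑i) = e (⟨u, hu⟩ : U) := rfl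
      rw [h3, e.symm_apply_apply]
    have h4 : (∑ i : ↥(bᶜ), u ↑i • e.symm (Pi.single i 1 : ↥(bᶜ) → k)) = (⟨u, hu⟩ : U) := by
      have hs : ∀ i : ↥(bᶜ), u ↑i • e.symm (Pi.single i 1 : ↥(bᶜ) → k)
          = e.symm (u ↑i • (Pi.single i 1 : ↥(bᶜ) → k)) := fun i => (map_smul e.symm _ _).symm
      rw [Finset.sum_congr rfl fun i _ => hs i, ← map_sum]
      have : (∑ i : ↥(bᶜ), u ↑i • (Pi.single i 1 : ↥(bᶜ) → k)) = fun i : ↥(bᶜ) => u ↑i := h1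
      rw [this, h2]
    calc ∑ i : ↥(bᶜ), u ↑i * ((e.symm (Pi.single i 1) : U) : Fin n → k) j
        = ((∑ i : ↥(bᶜ), u ↑i • e.symm (Pi.single i 1 : ↥(bᶜ) → k) : U) : Fin n → k) j := by
          rw [Submodule.coe_sum, Finset.sum_apply]
          simp [smul_eq_mul]
      _ = u j := by rw [h4]
  -- restriction of e.symm (single i0 1) to bᶜ is single i0 1
  have hsingle : ∀ i0 : ↥(bᶜ), ∀ i : ↥(bᶜ),
      ((e.symm (Pi.single i0 1) : U) : Fin n → k) ↑i = (Pi.single i0 1 : ↥(bᶜ) → k) i := by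
    intro i0 i
    have := congrFun (e.apply_symm_apply (Pi.single i0 1 : ↥(bᶜ) → k)) i
    rw [hres] at this
    exact this
  constructor
  · -- injectivity
    intro x y hxy
    have hd : ((x : Fin n → k) - y) ∈ dualPerp U := sub_mem x.2 y.2
    have h0 : ∀ i : ↥b, ((x : Fin n → k) - y) ↑i = 0 := by
      intro i
      have := congrFun hxy i
      simpa [sub_eq_zero] using this
    have hz : ((x : Fin n → k) - y) = 0 := by
      funext j
      by_cases hj : j ∈ b
      · exact h0 ⟨j, hj⟩
      · set d : Fin n → k := (x : Fin n → k) - y with hdd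
        set i0 : ↥(bᶜ) := ⟨j, hj⟩
        set u : Fin n → k := ((e.symm (Pi.single i0 1) : U) : Fin n → k) with hud
        have hu : u ∈ U := (e.symm (Pi.single i0 1)).2
        have hzero := (mem_dualPerp_iff d).mp hd u hu
        rw [split_sum b] at hzero
        have hb0 : (∑ i : ↥b, u ↑i * d ↑i) = 0 := by
          apply Finset.sum_eq_zero; intro i _; rw [h0 i, mul_zero]
        have hc0 : (∑ i : ↥(bᶜ), u ↑i * d ↑i) = d j := by
          have : ∀ i : ↥(bᶜ), u ↑i * d ↑i = (Pi.single i0 1 : ↥(bᶜ) → k) i * d ↑i := by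
            intro i; rw [hud, hsingle i0 i]
          rw [Finset.sum_congr rfl fun i _ => this i]
          simp [Pi.single_apply]; rfl
        rw [hb0, hc0, zero_add] at hzero
        exact hzero
    exact Subtype.ext (by rwa [sub_eq_zero] at hz)
  · -- surjectivity
    intro z
    set x : Fin n → k := fun j =>
      if h : j ∈ b then z ⟨j, h⟩
      else -∑ i : ↥b, z i * ((e.symm (Pi.single ⟨j, h⟩ 1) : U) : Fin n → k) ↑i with hxd
    have hx : x ∈ dualPerp U := by
      rw [mem_dualPerp_iff]
      intro u hu
      rw [split_sum b]
      have hb1 : (∑ i : ↥b, u ↑i * x ↑i) = ∑ i : ↥b, u ↑i * z i := by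
        apply Finset.sum_congr rfl; intro i _
        congr 1
        rw [hxd]; exact dif_pos i.2
      have hc1 : (∑ i : ↥(bᶜ), u ↑i * x ↑i) = -∑ i : ↥b, z i * u ↑i := by
        have step : ∀ i : ↥(bᶜ), u ↑i * x ↑i =
            -∑ j : ↥b, z j * (u ↑i * ((e.symm (Pi.single i 1) : U) : Fin n → k) ↑j) := by
          intro i
          have hxi : x ↑i = -∑ j : ↥b, z j * ((e.symm (Pi.single i 1) : U) : Fin n → k) ↑j := by
            rw [hxd]; exact dif_neg i.2
          rw [hxi, mul_neg, Finset.mul_sum]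
          congr 1; apply Finset.sum_congr rfl; intro j _; ring
        rw [Finset.sum_congr rfl fun i _ => step i, Finset.sum_neg_distrib, neg_inj,
          Finset.sum_comm]
        apply Finset.sum_congr rfl; intro j _
        rw [← Finset.mul_sum, hsum u hu]
      rw [hb1, hc1, add_neg_eq_zero]
      exact Finset.sum_congr rfl fun i _ => mul_comm _ _
    refine ⟨⟨x, hx⟩, ?_⟩
    funext i
    show x ↑i = z i
    rw [hxd]; exact dif_pos i.2
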